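/- For every irrational α, m(α) ≤ 1/2 and m(α) ≥ 1/4, where m(α) = limsup_{t→∞} t·μ_α(t) and μ_α is the Minkowski diagonal function of α. Hence min 𝕄 ≥ 1/4 and max 𝕄 ≤ 1/2 for the spectrum 𝕄 = {m(α) : α irrational}. -/

import Mathlib

open Real Filter Set

/-- The function F from the paper. -/
noncomputable def Fm (x y : ℝ) : ℝ := (1 - x*y)^2 / (4*(1+x*y)*(1-x)*(1-y))

/-- The function G from the paper. -/
noncomputable def Gm (x y : ℝ) : ℝ := (x + y + 1)/4

/-- Complete quotients of α : cq α 0 = α, cq α (n+1) = 1/{cq α n}. -/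
noncomputable def cq (α : ℝ) : ℕ → ℝ
  | 0 => α
  | n+1 => (Int.fract (cq α n))⁻¹

/-- Partial quotients a_n of the continued fraction of α. -/
noncomputable def pquot (α : ℝ) (n : ℕ) : ℤ := ⌊cq α n⌋

/-- Denominators q_n of the convergents of α. -/
noncomputable def qd (α : ℝ) : ℕ → ℝ
  | 0 => 1
  | 1 => (pquot α 1 : ℝ)
  | n+2 => (pquot α (n+2) : ℝ) * qd α (n+1) + qd α n

/-- Numerators p_n of the convergents of α. -/
noncomputable def pnum (α : ℝ) : ℕ → ℝ
  | 0 => (pquot α 0 : ℝ)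
  | 1 => (pquot α 1 : ℝ) * (pquot α 0 : ℝ) + 1
  | n+2 => (pquot α (n+2) : ℝ) * pnum α (n+1) + pnum α n

/-- ξ_n = |q_n α - p_n|. -/
noncomputable def xi (α : ℝ) (n : ℕ) : ℝ := |qd α n * α - pnum α n|

/-- α*_n = [0; a_n, ..., a_1] = q_{n-1}/q_n. -/
noncomputable def astar (α : ℝ) (n : ℕ) : ℝ := qd α (n-1) / qd α n

/-- Distance from x to the nearest integer. -/
noncomputable def nidist (x : ℝ) : ℝ := |x - round x|

/-- The ν-th convergent denominator satisfies the Legendre condition. -/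
noncomputable def LegendreDen (α : ℝ) (ν : ℕ) : Prop :=
  |α - pnum α ν / qd α ν| < 1/(2 * (qd α ν)^2)

/-- ψ_α(t) = min_{1 ≤ x ≤ t} ‖xα‖. -/
noncomputable def psif (α : ℝ) (t : ℝ) : ℝ :=
  sInf {d : ℝ | ∃ x : ℤ, 1 ≤ x ∧ (x:ℝ) ≤ t ∧ d = nidist (x*α)}
lemma cq_irr {α : ℝ} (hα : Irrational α) : ∀ n, Irrational (cq α n)
  | 0 => hα
  | n+1 => by
      have h := cq_irr hα n
      have : Irrational (Int.fract (cq α n)) := by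
        unfold Int.fract
        exact h.sub_intCast _
      simpa [cq] using this.inv

lemma fract_pos {α : ℝ} (hα : Irrational α) (n : ℕ) : 0 < Int.fract (cq α n) := by
  rcases lt_or_eq_of_le (Int.fract_nonneg (cq α n)) with h | h
  · exact h
  · exfalso
    have h2 : Irrational (Int.fract (cq α n)) := by
      unfold Int.fract; exact (cq_irr hα n).sub_intCast _
    exact h2.ne_zero h.symm

lemma cq_gt_one {α : ℝ} (hα : Irrational α) (n : ℕ) : 1 < cq α (n+1) := by
  have h0 := fract_pos hα n
  have h1 := Int.fract_lt_one (cq α n)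
  rw [cq]
  exact (one_lt_inv_iff₀).2 ⟨h0, h1⟩

lemma pquot_ge_one {α : ℝ} (hα : Irrational α) (n : ℕ) : (1:ℝ) ≤ (pquot α (n+1) : ℝ) := by
  have := cq_gt_one hα n
  have h : (1:ℤ) ≤ pquot α (n+1) := Int.le_floor.2 (by exact_mod_cast this.le)
  exact_mod_cast h

/-- cq α n = ⌊cq α n⌋ + (cq α (n+1))⁻¹ -/
lemma cq_eq {α : ℝ} (hα : Irrational α) (n : ℕ) :
    cq α n = (pquot α n : ℝ) + (cq α (n+1))⁻¹ := by
  have h0 := (fract_pos hα n).ne'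
  rw [show cq α (n+1) = (Int.fract (cq α n))⁻¹ from rfl, inv_inv, pquot, Int.fract]
  ring

lemma cq_pos {α : ℝ} (hα : Irrational α) (n : ℕ) : 0 < cq α (n+1) :=
  lt_trans one_pos (cq_gt_one hα n)

lemma qd_ge_one {α : ℝ} (hα : Irrational α) : ∀ n, (1:ℝ) ≤ qd α n
  | 0 => le_refl 1
  | 1 => pquot_ge_one hα 0
  | n+2 => by
      have h1 := qd_ge_one hα (n+1)
      have h0 := qd_ge_one hα n
      have ha := pquot_ge_one hα (n+1)
      show (1:ℝ) ≤ (pquot α (n+2) : ℝ) * qd α (n+1) + qd α n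
      nlinarith

lemma qd_pos {α : ℝ} (hα : Irrational α) (n : ℕ) : 0 < qd α n :=
  lt_of_lt_of_le one_pos (qd_ge_one hα n)

lemma qd_succ_lt {α : ℝ} (hα : Irrational α) (n : ℕ) : qd α (n+1) < qd α (n+2) := by
  have h1 := qd_ge_one hα (n+1)
  have h0 := qd_ge_one hα n
  have ha := pquot_ge_one hα (n+1)
  show qd α (n+1) < (pquot α (n+2) : ℝ) * qd α (n+1) + qd α n
  nlinarith

lemma qd_le_succ {α : ℝ} (hα : Irrational α) : ∀ n, qd α n ≤ qd α (n+1)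
  | 0 => pquot_ge_one hα 0
  | n+1 => (qd_succ_lt hα n).le

lemma qd_mono {α : ℝ} (hα : Irrational α) : Monotone (qd α) :=
  monotone_nat_of_le_succ (qd_le_succ hα)

lemma qd_lt_two_step {α : ℝ} (hα : Irrational α) (n : ℕ) : qd α n + 1 ≤ qd α (n+2) := by
  have h1 := qd_ge_one hα (n+1)
  have h0 := qd_ge_one hα n
  have ha := pquot_ge_one hα (n+1)
  show qd α n + 1 ≤ (pquot α (n+2) : ℝ) * qd α (n+1) + qd α n
  nlinarith

lemma qd_strict_of_ge_one {α : ℝ} (hα : Irrational α) {m n : ℕ} (hm : 1 ≤ m) (h : m < n) :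
    qd α m < qd α n := by
  obtain ⟨k, rfl⟩ := Nat.exists_eq_add_of_le hm
  obtain ⟨j, rfl⟩ := Nat.exists_eq_add_of_lt h
  have h1 : qd α (k + 1) < qd α (k + 2) := qd_succ_lt hα k
  have h2 : qd α (k + 2) ≤ qd α (k + 1 + j + 1) := qd_mono hα (by omega)
  have e : 1 + k = k + 1 := by omega
  rw [e]
  linarith

lemma qd_unbounded {α : ℝ} (hα : Irrational α) (k : ℕ) : (k:ℝ) ≤ qd α (2*k) := by
  induction k with
  | zero => simp [qd]
  | succ k ih =>
      have := qd_lt_two_step hα (2*k)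
      have h2 : 2*(k+1) = 2*k+2 := by ring
      rw [h2]
      push_cast
      linarith

noncomputable def pri (α : ℝ) : ℕ → ℝ
  | 0 => (cq α 1)⁻¹
  | n+1 => pri α n * (cq α (n+2))⁻¹

lemma pri_pos {α : ℝ} (hα : Irrational α) : ∀ n, 0 < pri α n
  | 0 => inv_pos.2 (cq_pos hα 0)
  | n+1 => mul_pos (pri_pos hα n) (inv_pos.2 (cq_pos hα (n+1)))

lemma pri_succ_lt {α : ℝ} (hα : Irrational α) (n : ℕ) : pri α (n+1) < pri α n := by
  have h := cq_gt_one hα (n+1)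
  have hp := pri_pos hα n
  show pri α n * (cq α (n+2))⁻¹ < pri α n
  have : (cq α (n+2))⁻¹ < 1 := by
    rw [inv_lt_one_iff₀]; right; exact h
  nlinarith

lemma eta_eq {α : ℝ} (hα : Irrational α) : ∀ n, qd α n * α - pnum α n = (-1)^n * pri α n
  | 0 => by
      have h := cq_eq hα 0
      show qd α 0 * α - pnum α 0 = (-1)^0 * pri α 0
      show qd α 0 * α - pnum α 0 = (-1)^0 * (cq α 1)⁻¹
      have hq : qd α 0 = 1 := rfl
      have hp : pnum α 0 = (pquot α 0 : ℝ) := rfl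
      have h0 : cq α 0 = α := rfl
      rw [h0] at h
      norm_num at h
      rw [hq, hp]
      linear_combination h
  | 1 => by
      have h1 := cq_eq hα 1
      have h0 := cq_eq hα 0
      have hc1 : cq α 1 ≠ 0 := (cq_pos hα 0).ne'
      show qd α 1 * α - pnum α 1 = (-1)^1 * pri α 1
      show (pquot α 1 : ℝ) * α - ((pquot α 1 : ℝ) * (pquot α 0 : ℝ) + 1)
        = (-1)^1 * (pri α 0 * (cq α 2)⁻¹)
      show (pquot α 1 : ℝ) * α - ((pquot α 1 : ℝ) * (pquot α 0 : ℝ) + 1)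
        = (-1)^1 * ((cq α 1)⁻¹ * (cq α 2)⁻¹)
      have hα0 : cq α 0 = α := rfl
      rw [hα0] at h0
      norm_num at h0 h1
      have hkey : (cq α 2)⁻¹ = cq α 1 - (pquot α 1 : ℝ) := by
        rw [h1]; ring
      rw [hkey]
      have hinv : (cq α 1)⁻¹ * cq α 1 = 1 := inv_mul_cancel₀ hc1
      linear_combination (pquot α 1 : ℝ) * h0 + hinv
  | n+2 => by
      have e1 := eta_eq hα (n+1)
      have e0 := eta_eq hα n
      have hc := cq_eq hα (n+2)
      have hcne : cq α (n+2) ≠ 0 := (cq_pos hα (n+1)).ne'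
      have hrec : qd α (n+2) * α - pnum α (n+2)
          = (pquot α (n+2) : ℝ) * (qd α (n+1) * α - pnum α (n+1)) + (qd α n * α - pnum α n) := by
        show ((pquot α (n+2) : ℝ) * qd α (n+1) + qd α n) * α
            - ((pquot α (n+2) : ℝ) * pnum α (n+1) + pnum α n) = _
        ring
      rw [hrec, e1, e0]
      show _ = (-1)^(n+2) * (pri α (n+1) * (cq α (n+3))⁻¹)
      show (pquot α (n+2) : ℝ) * ((-1)^(n+1) * (pri α n * (cq α (n+2))⁻¹)) + (-1)^n * pri α n
        = (-1)^(n+2) * (pri α n * (cq α (n+2))⁻¹ * (cq α (n+3))⁻¹)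
      have key : (cq α (n+3))⁻¹ = cq α (n+2) - (pquot α (n+2) : ℝ) := by
        rw [hc]; ring
      rw [key]
      field_simp
      ring

lemma xi_eq_pri {α : ℝ} (hα : Irrational α) (n : ℕ) : xi α n = pri α n := by
  rw [xi, eta_eq hα n, abs_mul, abs_pow, abs_neg, abs_one, one_pow, one_mul,
    abs_of_pos (pri_pos hα n)]

lemma xi_pos {α : ℝ} (hα : Irrational α) (n : ℕ) : 0 < xi α n := by
  rw [xi_eq_pri hα]; exact pri_pos hα n

lemma xi_succ_lt {α : ℝ} (hα : Irrational α) (n : ℕ) : xi α (n+1) < xi α n := by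
  rw [xi_eq_pri hα, xi_eq_pri hα]; exact pri_succ_lt hα n

lemma xi_lt_of_lt {α : ℝ} (hα : Irrational α) {m n : ℕ} (h : m < n) : xi α n < xi α m := by
  induction n with
  | zero => omega
  | succ k ih =>
      rcases Nat.lt_succ_iff_lt_or_eq.1 h with h' | h'
      · exact lt_trans (xi_succ_lt hα k) (ih h')
      · subst h'; exact xi_succ_lt hα m

/-- determinant identity -/
lemma det_eq {α : ℝ} (hα : Irrational α) :
    ∀ n, pnum α (n+1) * qd α n - pnum α n * qd α (n+1) = (-1)^n
  | 0 => by
      show ((pquot α 1 : ℝ) * (pquot α 0 : ℝ) + 1) * 1 - (pquot α 0 : ℝ) * (pquot α 1 : ℝ) = (-1:ℝ)^0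
      ring
  | n+1 => by
      have ih := det_eq hα n
      show pnum α (n+2) * qd α (n+1) - pnum α (n+1) * qd α (n+2) = (-1)^(n+1)
      show ((pquot α (n+2) : ℝ) * pnum α (n+1) + pnum α n) * qd α (n+1)
        - pnum α (n+1) * ((pquot α (n+2) : ℝ) * qd α (n+1) + qd α n) = (-1)^(n+1)
      have : (-1:ℝ)^(n+1) = -(-1)^n := by ring
      rw [this]
      linear_combination -ih

/-- the fundamental identity q_{n+1} ξ_n + q_n ξ_{n+1} = 1 -/
lemma fund_id {α : ℝ} (hα : Irrational α) (n : ℕ) :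
    qd α (n+1) * xi α n + qd α n * xi α (n+1) = 1 := by
  have h0 := eta_eq hα n
  have h1 := eta_eq hα (n+1)
  have hd := det_eq hα n
  have key : qd α (n+1) * ((-1:ℝ)^n * pri α n) - qd α n * ((-1)^(n+1) * pri α (n+1))
      = (-1)^n := by
    rw [← h0, ← h1]
    linarith [hd]
  have h2 : ((-1:ℝ)^n) * (qd α (n+1) * pri α n + qd α n * pri α (n+1)) = (-1)^n * 1 := by
    rw [mul_one]
    calc ((-1:ℝ)^n) * (qd α (n+1) * pri α n + qd α n * pri α (n+1))
        = qd α (n+1) * ((-1:ℝ)^n * pri α n) - qd α n * ((-1)^(n+1) * pri α (n+1)) := by ring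
      _ = (-1)^n := key
  have hne : ((-1:ℝ)^n) ≠ 0 := by positivity
  have := mul_left_cancel₀ hne h2
  rw [xi_eq_pri hα, xi_eq_pri hα]
  linarith [this]

/-- xi recursion: ξ_n = a_{n+2} ξ_{n+1} + ξ_{n+2} -/
lemma xi_rec {α : ℝ} (hα : Irrational α) (n : ℕ) :
    xi α n = (pquot α (n+2) : ℝ) * xi α (n+1) + xi α (n+2) := by
  have h0 := eta_eq hα n
  have h1 := eta_eq hα (n+1)
  have h2 := eta_eq hα (n+2)
  have hrec : qd α (n+2) * α - pnum α (n+2)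
      = (pquot α (n+2) : ℝ) * (qd α (n+1) * α - pnum α (n+1)) + (qd α n * α - pnum α n) := by
    show ((pquot α (n+2) : ℝ) * qd α (n+1) + qd α n) * α
        - ((pquot α (n+2) : ℝ) * pnum α (n+1) + pnum α n) = _
    ring
  rw [h0, h1, h2] at hrec
  have key : ((-1:ℝ)^n) * (pri α n - (pquot α (n+2) : ℝ) * pri α (n+1) - pri α (n+2))
      = ((-1:ℝ)^n) * 0 := by
    rw [mul_zero]
    have e1 : (-1:ℝ)^(n+1) = -(-1)^n := by ring
    have e2 : (-1:ℝ)^(n+2) = (-1)^n := by ring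
    rw [e1, e2] at hrec
    linarith [hrec]
  have hne : ((-1:ℝ)^n) ≠ 0 := by positivity
  have := mul_left_cancel₀ hne key
  rw [xi_eq_pri hα, xi_eq_pri hα, xi_eq_pri hα]
  linarith [this]

/-- integer value of pnum -/
noncomputable def zp (α : ℝ) : ℕ → ℤ
  | 0 => pquot α 0
  | 1 => pquot α 1 * pquot α 0 + 1
  | n+2 => pquot α (n+2) * zp α (n+1) + zp α n

lemma pnum_eq_zp (α : ℝ) : ∀ n, pnum α n = (zp α n : ℝ)
  | 0 => rfl
  | 1 => by push_cast [pnum, zp]; ring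
  | n+2 => by
      have h1 := pnum_eq_zp α (n+1)
      have h0 := pnum_eq_zp α n
      show (pquot α (n+2) : ℝ) * pnum α (n+1) + pnum α n = ((pquot α (n+2) * zp α (n+1) + zp α n : ℤ) : ℝ)
      rw [h1, h0]; push_cast; ring

lemma nidist_qd {α : ℝ} (hα : Irrational α) (n : ℕ) (h : xi α n < 1/2) :
    nidist (qd α n * α) = xi α n := by
  have heq : qd α n * α = (zp α n : ℝ) + (qd α n * α - pnum α n) := by
    rw [← pnum_eq_zp]; ring
  have habs : |qd α n * α - pnum α n| < 1/2 := h
  have hround : round (qd α n * α) = zp α n := by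
    rw [heq, round_intCast_add]
    have : round (qd α n * α - pnum α n) = 0 := by
      rw [round_eq_zero_iff]
      constructor
      · linarith [abs_lt.1 habs |>.1]
      · linarith [abs_lt.1 habs |>.2]
    rw [this, add_zero]
  rw [nidist, hround, ← pnum_eq_zp]
  rfl

lemma legendre_iff {α : ℝ} (hα : Irrational α) (n : ℕ) :
    LegendreDen α n ↔ qd α n * xi α n < 1/2 := by
  have hq := qd_pos hα n
  have h1 : α - pnum α n / qd α n = (qd α n * α - pnum α n) / qd α n := by
    field_simp
  rw [LegendreDen, h1, abs_div, abs_of_pos hq]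
  rw [div_lt_div_iff₀ hq (by positivity)]
  constructor
  · intro h
    have := h
    rw [show |qd α n * α - pnum α n| = xi α n from rfl] at this
    nlinarith [this, hq]
  · intro h
    rw [show |qd α n * α - pnum α n| = xi α n from rfl]
    nlinarith [h, hq]

lemma xi_lt_half_of_leg {α : ℝ} (hα : Irrational α) {n : ℕ} (h : LegendreDen α n) :
    xi α n < 1/2 := by
  have h2 := (legendre_iff hα n).1 h
  have := qd_ge_one hα n
  nlinarith [xi_pos hα n]

/-- Vahlen: of two consecutive convergents, one satisfies Legendre -/
lemma vahlen {α : ℝ} (hα : Irrational α) (n : ℕ) :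
    LegendreDen α n ∨ LegendreDen α (n+1) := by
  by_contra hc
  push_neg at hc
  obtain ⟨h1, h2⟩ := hc
  rw [legendre_iff hα] at h1 h2
  push_neg at h1 h2
  have hf := fund_id hα n
  have ha := qd_pos hα n
  have hb := qd_pos hα (n+1)
  have hx := xi_pos hα n
  have hy := xi_pos hα (n+1)
  have hxy := xi_succ_lt hα n
  set a := qd α n
  set b := qd α (n+1)
  set x := xi α n
  set y := xi α (n+1)
  have habxy : 4*((a*x)*(b*y)) ≤ 1 := by nlinarith [sq_nonneg (b*x - a*y)]
  have h7 : a*x ≤ 1/2 := by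
    nlinarith [mul_nonneg (le_of_lt (mul_pos ha hx)) (by linarith : (0:ℝ) ≤ 2*(b*y) - 1)]
  have h8 : b*y ≤ 1/2 := by
    nlinarith [mul_nonneg (le_of_lt (mul_pos hb hy)) (by linarith : (0:ℝ) ≤ 2*(a*x) - 1)]
  have hax : a*x = 1/2 := le_antisymm h7 (by linarith)
  have hby : b*y = 1/2 := le_antisymm h8 (by linarith)
  have hsq : (b*x - a*y)^2 = 0 := by
    have hle : (b*x - a*y)^2 ≤ 0 := by nlinarith
    exact le_antisymm hle (sq_nonneg _)
  have hbxay : b*x = a*y := by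
    have := pow_eq_zero_iff (n := 2) (by norm_num) |>.1 hsq
    linarith [sub_eq_zero.1 this]
  have hay : a*y = 1/2 := by linarith
  nlinarith [mul_pos ha (sub_pos.2 hxy)]

/-- if L ν then qd ν < qd (ν+1) -/
lemma qd_lt_of_leg {α : ℝ} (hα : Irrational α) {n : ℕ} (h : LegendreDen α n) :
    qd α n < qd α (n+1) := by
  match n with
  | k+1 =>
      have h1 := qd_ge_one hα (k+1)
      have h0 := qd_ge_one hα k
      have ha := pquot_ge_one hα (k+1)
      show qd α (k+1) < (pquot α (k+2) : ℝ) * qd α (k+1) + qd α k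
      nlinarith
  | 0 =>
      -- L 0 means xi 0 < 1/2, xi 0 = (cq α 1)⁻¹, so cq α 1 > 2, a1 ≥ 2
      have hx := xi_lt_half_of_leg hα h
      rw [xi_eq_pri hα] at hx
      have hx' : (cq α 1)⁻¹ < 1/2 := hx
      have hc : 2 < cq α 1 := by
        have hcp := cq_pos hα 0
        rw [inv_lt_iff_one_lt_mul₀ hcp] at hx'
        nlinarith
      have ha : (2:ℤ) ≤ pquot α 1 := Int.le_floor.2 (by exact_mod_cast hc.le)
      show qd α 0 < qd α 1
      show (1:ℝ) < (pquot α 1 : ℝ)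
      have : (2:ℝ) ≤ (pquot α 1 : ℝ) := by exact_mod_cast ha
      linarith

/-- the per-interval key facts -/
def GoodPair (q Q' x X : ℝ) : Prop :=
  0 < X ∧ X < x ∧ 0 < q ∧ q < Q' ∧
  (q*X + Q'*x - 1)^2 ≤ (1 - 2*(q*x))*(1 - 2*(Q'*X)) ∧
  1 - q*x - Q'*X ≤ q*X + Q'*x

lemma upper_t {q Q' x X : ℝ} (hg : GoodPair q Q' x X) (t : ℝ) :
    2*t*((Q'-t)*x + (t-q)*X) ≤ Q' - q := by
  obtain ⟨hX, hXx, hq, hqQ, hkey1, hkey2⟩ := hg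
  have hfac : 2*(x - X)*(2*t*((Q'-t)*x + (t-q)*X) - (Q' - q))
      = -(2*(x-X)*t - (Q'*x - q*X))^2 + (q*X + Q'*x - 1)^2
        - (1-2*(q*x))*(1-2*(Q'*X)) := by ring
  have h2 : 2*(x-X)*(2*t*((Q'-t)*x + (t-q)*X) - (Q' - q)) ≤ 0 := by
    rw [hfac]
    nlinarith [sq_nonneg (2*(x-X)*t - (Q'*x - q*X))]
  rcases le_or_gt (2*t*((Q'-t)*x + (t-q)*X)) (Q' - q) with h|h
  · exact h
  · exfalso
    nlinarith [mul_pos (by linarith : (0:ℝ) < 2*(x-X))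
      (by linarith : (0:ℝ) < 2*t*((Q'-t)*x + (t-q)*X) - (Q'-q))]

lemma lower_mid {q Q' x X : ℝ} (hg : GoodPair q Q' x X) :
    1 ≤ (q + Q')*(x + X) := by
  obtain ⟨hX, hXx, hq, hqQ, hkey1, hkey2⟩ := hg
  nlinarith [mul_pos hq (lt_trans hX hXx), mul_pos (lt_trans hq hqQ) hX]

lemma goodA {q Q' x X : ℝ} (hfund : Q'*x + q*X = 1) (hq : 0 < q) (hqQ : q < Q')
    (hX : 0 < X) (hXx : X < x) (hu : q*x < 1/2) (hv : Q'*X < 1/2) :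
    GoodPair q Q' x X := by
  refine ⟨hX, hXx, hq, hqQ, ?_, ?_⟩
  · have h1 : q*X + Q'*x - 1 = 0 := by linarith
    rw [h1]
    have hu0 : 0 < q*x := mul_pos hq (lt_trans hX hXx)
    have hv0 : 0 < Q'*X := mul_pos (lt_trans hq hqQ) hX
    nlinarith
  · nlinarith [mul_pos hq (lt_trans hX hXx), mul_pos (lt_trans hq hqQ) hX]

lemma goodB {q q1 A x x1 : ℝ} (hA : 1 ≤ A) (hfund : q1*x + q*x1 = 1)
    (hz : 1/2 ≤ q1*x1) (hq : 0 < q) (hq1 : q < q1)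
    (hx1 : 0 < x1) (hx1x : x1 < x) (hu : q*x < 1/2)
    (hX : 0 < x - A*x1) (hv : (A*q1+q)*(x - A*x1) < 1/2) :
    GoodPair q (A*q1+q) x (x - A*x1) := by
  have hq1' : 0 < q1 := lt_trans hq hq1
  have hqQ : q < A*q1 + q := by nlinarith
  refine ⟨hX, by nlinarith, hq, hqQ, ?_, ?_⟩
  · have hid : (1 - 2*(q*x))*(1 - 2*((A*q1+q)*(x - A*x1)))
        - (q*(x - A*x1) + (A*q1+q)*x - 1)^2
        = A^2*(2*(q1*x1) - (q1*x + q*x1)^2) := by ring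
    rw [hfund] at hid
    nlinarith [sq_nonneg A]
  · have hσ : (A*q1+q)*x + q*(x - A*x1) = A*(1 - 2*(q*x1)) + 2*(q*x) := by
      linear_combination A * hfund
    have hs : q*x1 < 1/2 := by nlinarith
    have hmul : 1*(1 - 2*(q*x1)) ≤ A*(1 - 2*(q*x1)) :=
      mul_le_mul_of_nonneg_right hA (by linarith)
    have hu0 : 0 < q*x := mul_pos hq (by linarith)
    have hv0 : 0 < (A*q1+q)*(x - A*x1) := mul_pos (by linarith) hX
    nlinarith

theorem stmt16 (α : ℝ) (hα : Irrational α)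
    (Q : ℕ → ℝ) (hQmono : StrictMono Q)
    (hQmem : ∀ n, ∃ ν, Q n = qd α ν ∧ LegendreDen α ν)
    (hQall : ∀ ν, LegendreDen α ν → ∃ n, Q n = qd α ν)
    (μ : ℝ → ℝ)
    (hμ : ∀ n, ∀ t ∈ Set.Icc (Q n) (Q (n+1)),
      μ t = ((Q (n+1) - t)/(Q (n+1) - Q n)) * nidist (Q n * α)
          + ((t - Q n)/(Q (n+1) - Q n)) * nidist (Q (n+1) * α)) :
    1/4 ≤ Filter.limsup (fun t => t * μ t) Filter.atTop ∧
    Filter.limsup (fun t => t * μ t) Filter.atTop ≤ 1/2 := by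
  classical
  -- structure of consecutive elements
  have struct : ∀ n, ∃ ν ν', Q n = qd α ν ∧ LegendreDen α ν ∧ Q (n+1) = qd α ν' ∧
      LegendreDen α ν' ∧ (ν' = ν + 1 ∨ (ν' = ν + 2 ∧ ¬ LegendreDen α (ν+1))) := by
    intro n
    obtain ⟨ν, hqν, hLν⟩ := hQmem n
    obtain ⟨ν₁, hqν₁, hLν₁⟩ := hQmem (n+1)
    have hlt : qd α ν < qd α ν₁ := by
      rw [← hqν, ← hqν₁]; exact hQmono (Nat.lt_succ_self n)
    have hνlt : ν < ν₁ := by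
      by_contra h
      push_neg at h
      exact absurd (qd_mono hα h) (not_le.2 hlt)
    have hnot : ∀ m, LegendreDen α m → ¬ (qd α ν < qd α m ∧ qd α m < qd α ν₁) := by
      rintro m hLm ⟨h1, h2⟩
      obtain ⟨k, hk⟩ := hQall m hLm
      rw [← hqν, ← hk] at h1
      rw [← hk, ← hqν₁] at h2
      have hk1 := hQmono.lt_iff_lt.1 h1
      have hk2 := hQmono.lt_iff_lt.1 h2
      omega
    by_cases hcase : ν₁ = ν + 1
    · exact ⟨ν, ν₁, hqν, hLν, hqν₁, hLν₁, Or.inl hcase⟩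
    · have hge2 : ν + 2 ≤ ν₁ := by omega
      have hnL1 : ¬ LegendreDen α (ν+1) := by
        intro hL1
        refine hnot (ν+1) hL1 ⟨qd_lt_of_leg hα hLν, ?_⟩
        rcases Nat.eq_or_lt_of_le hge2 with h|h
        · rw [← h] at *
          exact qd_strict_of_ge_one hα (by omega) (by omega)
        · exact qd_strict_of_ge_one hα (by omega) (by omega)
      have hL2 : LegendreDen α (ν+2) := (vahlen hα (ν+1)).resolve_left hnL1
      have hν2 : ν₁ = ν + 2 := by
        by_contra h
        have h3 : ν + 3 ≤ ν₁ := by omega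
        refine hnot (ν+2) hL2 ⟨?_, ?_⟩
        · linarith [qd_lt_two_step hα ν]
        · exact qd_strict_of_ge_one hα (by omega) (by omega)
      rw [hν2] at hqν₁ hLν₁
      exact ⟨ν, ν+2, hqν, hLν, hqν₁, hLν₁, Or.inr ⟨rfl, hnL1⟩⟩
  -- good pair facts for each interval
  have hgood : ∀ n, GoodPair (Q n) (Q (n+1)) (nidist (Q n * α)) (nidist (Q (n+1) * α)) := by
    intro n
    obtain ⟨ν, ν', hqν, hLν, hqν', hLν', hcase⟩ := struct n
    have hxν : xi α ν < 1/2 := xi_lt_half_of_leg hα hLν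
    have hxν' : xi α ν' < 1/2 := xi_lt_half_of_leg hα hLν'
    have hd1 : nidist (Q n * α) = xi α ν := by rw [hqν]; exact nidist_qd hα ν hxν
    have hd2 : nidist (Q (n+1) * α) = xi α ν' := by rw [hqν']; exact nidist_qd hα ν' hxν'
    rw [hd1, hd2, hqν, hqν']
    have hu : qd α ν * xi α ν < 1/2 := (legendre_iff hα ν).1 hLν
    have hv : qd α ν' * xi α ν' < 1/2 := (legendre_iff hα ν').1 hLν'
    have hq0 : 0 < qd α ν := qd_pos hα ν
    rcases hcase with h1 | ⟨h2, hnL1⟩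
    · subst h1
      exact goodA (fund_id hα ν) hq0 (qd_lt_of_leg hα hLν) (xi_pos hα (ν+1))
        (xi_succ_lt hα ν) hu hv
    · subst h2
      have hq2 : qd α (ν+2) = (pquot α (ν+2) : ℝ) * qd α (ν+1) + qd α ν := rfl
      have hx2 : xi α (ν+2) = xi α ν - (pquot α (ν+2) : ℝ) * xi α (ν+1) := by
        linarith [xi_rec hα ν]
      rw [hq2, hx2]
      have hz : 1/2 ≤ qd α (ν+1) * xi α (ν+1) := by
        by_contra h
        push_neg at h
        exact hnL1 ((legendre_iff hα (ν+1)).2 h)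
      refine goodB (pquot_ge_one hα (ν+1)) (fund_id hα ν) hz hq0
        (qd_lt_of_leg hα hLν) (xi_pos hα (ν+1)) (xi_succ_lt hα ν) hu ?_ ?_
      · rw [← hx2]; exact xi_pos hα (ν+2)
      · rw [← hx2, ← hq2]; exact hv
  -- pointwise bounds in each interval
  have hup : ∀ n, ∀ t ∈ Set.Icc (Q n) (Q (n+1)), t * μ t ≤ 1/2 := by
    intro n t ht
    have hg := hgood n
    obtain ⟨hX, hXx, hq, hqQ, _, _⟩ := hg
    have hμt := hμ n t ht
    have hne : Q (n+1) - Q n ≠ 0 := by linarith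
    have heq : t * μ t = t*((Q (n+1) - t)*(nidist (Q n * α)) + (t - Q n)*(nidist (Q (n+1) * α)))
        / (Q (n+1) - Q n) := by
      rw [hμt]; field_simp; try ring
    rw [heq, div_le_iff₀ (by linarith : (0:ℝ) < Q (n+1) - Q n)]
    linarith [upper_t (hgood n) t]
  have hlow : ∀ n, 1/4 ≤ ((Q n + Q (n+1))/2) * μ ((Q n + Q (n+1))/2) := by
    intro n
    have hg := hgood n
    obtain ⟨hX, hXx, hq, hqQ, _, _⟩ := hg
    have hne : Q (n+1) - Q n ≠ 0 := by linarith
    have hmem : (Q n + Q (n+1))/2 ∈ Set.Icc (Q n) (Q (n+1)) :=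
      ⟨by linarith, by linarith⟩
    have hμt := hμ n _ hmem
    have heq : ((Q n + Q (n+1))/2) * μ ((Q n + Q (n+1))/2)
        = (Q n + Q (n+1)) * ((nidist (Q n * α)) + (nidist (Q (n+1) * α))) / 4 := by
      rw [hμt]; field_simp; ring
    rw [heq]
    linarith [lower_mid (hgood n)]
  -- tendsto
  have hQtop : Filter.Tendsto Q Filter.atTop Filter.atTop := by
    apply tendsto_atTop_atTop_of_monotone hQmono.monotone
    intro b
    obtain ⟨m, hm⟩ := exists_nat_ge b
    have hq2m : (m:ℝ) ≤ qd α (2*m) := qd_unbounded hα m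
    rcases vahlen hα (2*m) with h|h
    · obtain ⟨n, hn⟩ := hQall _ h
      exact ⟨n, by rw [hn]; linarith⟩
    · obtain ⟨n, hn⟩ := hQall _ h
      have : qd α (2*m) ≤ qd α (2*m+1) := qd_mono hα (Nat.le_succ _)
      exact ⟨n, by rw [hn]; linarith⟩
  -- covering
  have hcov : ∀ t, Q 0 ≤ t → ∃ n, t ∈ Set.Icc (Q n) (Q (n+1)) := by
    intro t ht
    have hex : ∃ k, t < Q k := (hQtop.eventually (eventually_gt_atTop t)).exists
    have hk := Nat.find_spec hex
    have hk0 : Nat.find hex ≠ 0 := by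
      intro h
      rw [h] at hk
      linarith
    obtain ⟨j, hj⟩ := Nat.exists_eq_succ_of_ne_zero hk0
    refine ⟨j, ?_, ?_⟩
    · have := Nat.find_min hex (m := j) (by omega)
      push_neg at this
      exact this
    · rw [hj] at hk
      exact hk.le
  have h_ub : ∀ᶠ t in Filter.atTop, t * μ t ≤ 1/2 := by
    filter_upwards [eventually_ge_atTop (Q 0)] with t ht
    obtain ⟨n, hn⟩ := hcov t ht
    exact hup n t hn
  have h_freq : ∃ᶠ t in Filter.atTop, 1/4 ≤ t * μ t := by
    have hmid : Filter.Tendsto (fun n => (Q n + Q (n+1))/2) Filter.atTop Filter.atTop := by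
      apply tendsto_atTop_mono (fun n => ?_) hQtop
      have := (hQmono (Nat.lt_succ_self n)).le
      linarith
    exact hmid.frequently (Filter.Frequently.of_forall hlow)
  constructor
  · exact Filter.le_limsup_of_frequently_le h_freq
      (Filter.isBoundedUnder_of_eventually_le h_ub)
  · exact Filter.limsup_le_of_le (Filter.IsCoboundedUnder.of_frequently_ge h_freq) h_ub
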